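/- Suppose for each iteration j with k_1 <= j <= k-1 we have f(x_j) - f(x_{j+1}) >= (theta/(2(p+1)!)) nu_j ||s_j||^{p+1}, where nu_{j+1} = nu_j + nu_j ||s_j||^{p+1}, and f(x) >= f_low for all x. Then nu_k <= (2(p+1)!/theta)(f(x_{k_1}) - f_low) + nu_{k_1}. -/

import Mathlib

/-- Telescoping bound on the regularisation parameter:
if from `k₁` on each iteration decreases `f` by at least `(θ/(2(p+1)!)) ν_j ‖s_j‖^(p+1)`
and `f` is bounded below, then `ν_k ≤ (2(p+1)!/θ)(f(x_{k₁}) - f_low) + ν_{k₁}`. -/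
theorem nu_upper_bound {n : ℕ} (p : ℕ) (hp : 1 ≤ p)
    (f : EuclideanSpace ℝ (Fin n) → ℝ) (flow θ : ℝ) (hθ0 : 0 < θ) (hθ1 : θ < 1)
    (x s : ℕ → EuclideanSpace ℝ (Fin n)) (ν : ℕ → ℝ) (k1 k : ℕ) (hk : k1 ≤ k)
    (hbound : ∀ y, flow ≤ f y)
    (hx : ∀ j, x (j + 1) = x j + s j)
    (hν : ∀ j, ν (j + 1) = ν j + ν j * ‖s j‖ ^ (p + 1))
    (hνpos : ∀ j, 0 < ν j)
    (hdec : ∀ j, k1 ≤ j → j < k →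
      θ / (2 * ((p + 1).factorial : ℝ)) * ν j * ‖s j‖ ^ (p + 1) ≤ f (x j) - f (x (j + 1))) :
    ν k ≤ 2 * ((p + 1).factorial : ℝ) / θ * (f (x k1) - flow) + ν k1 := by
  set c : ℝ := 2 * ((p + 1).factorial : ℝ) / θ with hc
  have hfac : (0:ℝ) < ((p + 1).factorial : ℝ) := by positivity
  have hcpos : 0 < c := by positivity
  have hmul : c * (θ / (2 * ((p + 1).factorial : ℝ))) = 1 := by
    field_simp [hc]
    rw [hc]; field_simp
  have key : ∀ m, k1 ≤ m → m ≤ k → ν m ≤ c * (f (x k1) - f (x m)) + ν k1 := by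
    intro m hm
    induction m, hm using Nat.le_induction with
    | base => intro _; simp
    | succ m hm ih =>
      intro hmk
      have hmlt : m < k := hmk
      have ihm := ih (le_of_lt hmlt)
      have hd := hdec m hm hmlt
      have hterm : ν m * ‖s m‖ ^ (p + 1) ≤ c * (f (x m) - f (x (m + 1))) := by
        calc ν m * ‖s m‖ ^ (p + 1)
            = c * (θ / (2 * ((p + 1).factorial : ℝ)) * ν m * ‖s m‖ ^ (p + 1)) := by
              rw [show c * (θ / (2 * ((p + 1).factorial : ℝ)) * ν m * ‖s m‖ ^ (p + 1))
                = (c * (θ / (2 * ((p + 1).factorial : ℝ)))) * (ν m * ‖s m‖ ^ (p + 1)) by ring,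
                hmul, one_mul]
          _ ≤ c * (f (x m) - f (x (m + 1))) := by
              exact mul_le_mul_of_nonneg_left hd (le_of_lt hcpos)
      calc ν (m + 1) = ν m + ν m * ‖s m‖ ^ (p + 1) := hν m
        _ ≤ (c * (f (x k1) - f (x m)) + ν k1) + c * (f (x m) - f (x (m + 1))) :=
            add_le_add ihm hterm
        _ = c * (f (x k1) - f (x (m + 1))) + ν k1 := by ring
  have hfin := key k hk le_rfl
  have hlow : f (x k1) - f (x k) ≤ f (x k1) - flow := by linarith [hbound (x k)]
  calc ν k ≤ c * (f (x k1) - f (x k)) + ν k1 := hfin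
    _ ≤ c * (f (x k1) - flow) + ν k1 := by nlinarith
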